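/- Let m, n ≥ 1, let s₀ ∈ ℝ, and let A : ℝⁿ → M_m(ℂ) be a function such that there exist C > 0 and l ∈ ℕ with ‖A(ξ)‖ ≤ C(1+|ξ|)^l for all ξ ∈ ℝⁿ, and such that max{Re λ : λ ∈ σ(A(ξ))} ≤ s₀ for all ξ ∈ ℝⁿ. Then there exists k ∈ ℕ (one may take k = l(m−1)) such that for every ε > 0, sup{e^{−(s₀+ε)t}(1+|ξ|)^{−k}‖exp(tA(ξ))‖ : t ≥ 0, ξ ∈ ℝⁿ} < ∞. -/

import Mathlib

open scoped Matrix.Norms.L2Operator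

open Polynomial NormedSpace Finset

noncomputable def Sfun (nn : ℕ) (x : ℝ) : ℝ := ∑ j ∈ Finset.range nn, x^j / (Nat.factorial j)

lemma Sfun_nonneg (nn : ℕ) {x : ℝ} (hx : 0 ≤ x) : 0 ≤ Sfun nn x :=
  Finset.sum_nonneg fun j _ => div_nonneg (pow_nonneg hx j) (Nat.cast_nonneg _)

lemma comm_aux {d : ℕ} (B : Matrix (Fin d) (Fin d) ℂ) (a b : ℂ) :
    Commute (B - a • 1) (B - b • 1) := by
  have h : ∀ c : ℂ, B - c • 1 = Polynomial.aeval B (X - C c) := by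
    intro c; simp [Algebra.algebraMap_eq_smul_one]
  rw [Commute, SemiconjBy, h, h, ← map_mul, ← map_mul, mul_comm]

lemma core {d : ℕ} (s₀ K : ℝ) (hK : 0 ≤ K) (h1 : ‖(1 : Matrix (Fin d) (Fin d) ℂ)‖ ≤ 1)
    (B : Matrix (Fin d) (Fin d) ℂ) (hB : ‖B‖ ≤ K) :
    ∀ L : List ℂ, (∀ μ ∈ L, μ.re ≤ s₀ ∧ ‖μ‖ ≤ K) →
    ∀ V : Matrix (Fin d) (Fin d) ℂ, (L.map (fun μ => B - μ • 1)).prod * V = 0 →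
    ∀ t : ℝ, 0 ≤ t →
      ‖exp (t • B) * V‖ ≤ Real.exp (s₀ * t) * Sfun L.length (2*K*t) * ‖V‖ := by
  intro L
  induction L with
  | nil =>
    intro _ V hV t ht
    simp only [List.map_nil, List.prod_nil, one_mul] at hV
    simp [hV, Sfun]
  | cons μ L' ih =>
    intro hL V hV t ht
    obtain ⟨hμre, hμK⟩ := hL μ (List.mem_cons_self)
    have hL' : ∀ ν ∈ L', ν.re ≤ s₀ ∧ ‖ν‖ ≤ K := fun ν hν => hL ν (List.mem_cons_of_mem _ hν)
    set V' : Matrix (Fin d) (Fin d) ℂ := (B - μ • 1) * V with hV'def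
    have hcomm : ∀ x ∈ L'.map (fun ν => B - ν • 1), Commute (B - μ • 1) x := by
      intro x hx
      obtain ⟨ν, _, rfl⟩ := List.mem_map.1 hx
      exact comm_aux B μ ν
    have hPcomm : Commute (B - μ • 1) ((L'.map (fun ν => B - ν • 1)).prod) :=
      Commute.list_prod_right _ _ hcomm
    have hV' : (L'.map (fun ν => B - ν • 1)).prod * V' = 0 := by
      rw [hV'def, ← mul_assoc, ← hPcomm.eq, mul_assoc]
      simpa [List.prod_cons, mul_assoc] using hV
    have ihg := ih hL' V' hV'
    have hV'norm : ‖V'‖ ≤ 2*K*‖V‖ := by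
      calc ‖(B - μ • 1) * V‖ ≤ ‖B - μ • 1‖ * ‖V‖ := norm_mul_le _ _
      _ ≤ (2*K) * ‖V‖ := by
          apply mul_le_mul_of_nonneg_right _ (norm_nonneg V)
          calc ‖B - μ • 1‖ ≤ ‖B‖ + ‖μ • 1‖ := norm_sub_le _ _
          _ ≤ K + ‖μ‖ * ‖(1 : Matrix (Fin d) (Fin d) ℂ)‖ := by
              rw [norm_smul]; exact add_le_add hB le_rfl
          _ ≤ K + K * 1 := by gcongr
          _ = 2*K := by ring
    -- derivative of the integrating-factor product
    have hφderiv : ∀ s : ℝ,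
        HasDerivAt (fun u : ℝ => Complex.exp (u • (-μ)) • (exp (u • B) * V))
          (Complex.exp (s • (-μ)) • (exp (s • B) * V')) s := by
      intro s
      have h1d : HasDerivAt (fun u : ℝ => u • (-μ)) (-μ) s := by
        simpa using (hasDerivAt_id s).smul_const (-μ)
      have hc : HasDerivAt (fun u : ℝ => Complex.exp (u • (-μ)))
          ((-μ) * Complex.exp (s • (-μ))) s := by
        simpa [mul_comm] using h1d.cexp
      have hF : HasDerivAt (fun u : ℝ => exp (u • B) * V) (B * exp (s • B) * V) s :=
        (hasDerivAt_exp_smul_const' B s).mul_const V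
      have h := hc.smul hF
      refine h.congr_deriv (Eq.symm ?_)
      have hBexp : B * exp (s • B) = exp (s • B) * B :=
        (((Commute.refl B).smul_right s).exp_right).eq
      rw [hV'def]
      have e1 : exp (s • B) * ((B - μ • 1) * V)
          = B * exp (s • B) * V - μ • (exp (s • B) * V) := by
        rw [sub_mul, mul_sub, smul_mul_assoc, one_mul, mul_smul_comm, ← mul_assoc, ← hBexp,
          mul_assoc]
      rw [e1, smul_sub, smul_smul, mul_comm (Complex.exp (s • -μ)) μ, sub_eq_add_neg, ← neg_smul,
        ← neg_mul]
    -- continuity facts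
    have hdiff : Differentiable ℝ (fun s : ℝ => exp (s • B)) :=
      fun s => (hasDerivAt_exp_smul_const' B s).differentiableAt
    have hexpcont : Continuous (fun s : ℝ => exp (s • B)) := hdiff.continuous
    have hψcont : Continuous (fun s : ℝ => Complex.exp (s • (-μ)) • (exp (s • B) * V')) := by
      apply Continuous.fun_smul
      · exact Complex.continuous_exp.comp (continuous_id.smul continuous_const)
      · exact hexpcont.mul (continuous_const)
    -- FTC
    have hFTC : (∫ s in (0:ℝ)..t, Complex.exp (s • (-μ)) • (exp (s • B) * V'))
        = Complex.exp (t • (-μ)) • (exp (t • B) * V) - V := by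
      have := intervalIntegral.integral_eq_sub_of_hasDerivAt
        (f := fun u : ℝ => Complex.exp (u • (-μ)) • (exp (u • B) * V))
        (f' := fun u : ℝ => Complex.exp (u • (-μ)) • (exp (u • B) * V'))
        (fun s _ => hφderiv s) (hψcont.intervalIntegrable 0 t)
      rw [this]
      congr 1
      simp [NormedSpace.exp_zero]
    -- norm computations
    have hnormc : ∀ s : ℝ, ‖Complex.exp (s • (-μ))‖ = Real.exp (-(μ.re) * s) := by
      intro s
      rw [Complex.norm_exp]
      congr 1
      simp [Complex.real_smul]
      ring
    -- integrand bound
    have hle : ∀ s ∈ Set.Icc (0:ℝ) t,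
        ‖Complex.exp (s • (-μ)) • (exp (s • B) * V')‖ ≤
          Real.exp ((s₀ - μ.re) * t) * (2*K*‖V‖ * Sfun L'.length (2*K*s)) := by
      intro s hs
      obtain ⟨hs0, hst⟩ := hs
      rw [norm_smul, hnormc s]
      calc Real.exp (-(μ.re) * s) * ‖exp (s • B) * V'‖
          ≤ Real.exp (-(μ.re) * s) * (Real.exp (s₀ * s) * Sfun L'.length (2*K*s) * ‖V'‖) := by
            exact mul_le_mul_of_nonneg_left (ihg s hs0) (Real.exp_nonneg _)
        _ = Real.exp ((s₀ - μ.re) * s) * (Sfun L'.length (2*K*s) * ‖V'‖) := by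
            rw [← mul_assoc, ← mul_assoc, ← Real.exp_add]; ring_nf
        _ ≤ Real.exp ((s₀ - μ.re) * t) * (Sfun L'.length (2*K*s) * ‖V'‖) := by
            apply mul_le_mul_of_nonneg_right
            · exact Real.exp_le_exp.2 (mul_le_mul_of_nonneg_left hst (by linarith))
            · exact mul_nonneg (Sfun_nonneg _ (by positivity)) (norm_nonneg _)
        _ ≤ Real.exp ((s₀ - μ.re) * t) * (2*K*‖V‖ * Sfun L'.length (2*K*s)) := by
            apply mul_le_mul_of_nonneg_left _ (Real.exp_nonneg _)
            rw [mul_comm (2*K*‖V‖)]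
            exact mul_le_mul_of_nonneg_left hV'norm (Sfun_nonneg _ (by positivity))
    -- integral of the bound
    have hQ : (∫ s in (0:ℝ)..t, Real.exp ((s₀ - μ.re) * t) * (2*K*‖V‖ * Sfun L'.length (2*K*s)))
        = Real.exp ((s₀ - μ.re) * t) *
            ((∑ j ∈ Finset.range L'.length, (2*K*t)^(j+1) / (Nat.factorial (j+1))) * ‖V‖) := by
      rw [intervalIntegral.integral_const_mul]
      congr 1
      unfold Sfun
      rw [intervalIntegral.integral_const_mul]
      have hswap : (∫ s in (0:ℝ)..t, ∑ j ∈ Finset.range L'.length, (2*K*s)^j / (Nat.factorial j))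
          = ∑ j ∈ Finset.range L'.length, ∫ s in (0:ℝ)..t, (2*K*s)^j / (Nat.factorial j) :=
        intervalIntegral.integral_finset_sum (fun j _ =>
          (((continuous_const.mul continuous_id).pow j).div_const _).intervalIntegrable 0 t)
      rw [hswap, Finset.mul_sum, Finset.sum_mul]
      apply Finset.sum_congr rfl
      intro j _
      rw [show (fun s : ℝ => (2*K*s)^j / (Nat.factorial j))
          = (fun s : ℝ => ((2*K)^j / (Nat.factorial j)) * s^j) by
        funext s; rw [mul_pow]; ring]
      rw [intervalIntegral.integral_const_mul, integral_pow]
      rw [Nat.factorial_succ, mul_pow]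
      push_cast
      field_simp
      ring
    -- continuity of the bound
    have hScont : Continuous (fun s : ℝ => Sfun L'.length (2*K*s)) := by
      unfold Sfun
      apply continuous_finset_sum
      intro j _
      exact ((continuous_const.mul continuous_id).pow j).div_const _
    have hbcont : Continuous (fun s : ℝ =>
        Real.exp ((s₀ - μ.re) * t) * (2*K*‖V‖ * Sfun L'.length (2*K*s))) :=
      continuous_const.mul (continuous_const.mul hScont)
    -- bounding the integral
    have h2 : (∫ s in (0:ℝ)..t, ‖Complex.exp (s • (-μ)) • (exp (s • B) * V')‖)
        ≤ ∫ s in (0:ℝ)..t, Real.exp ((s₀ - μ.re) * t) * (2*K*‖V‖ * Sfun L'.length (2*K*s)) :=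
      intervalIntegral.integral_mono_on ht (hψcont.norm.intervalIntegrable 0 t)
        (hbcont.intervalIntegrable 0 t) hle
    have h3 : ‖∫ s in (0:ℝ)..t, Complex.exp (s • (-μ)) • (exp (s • B) * V')‖
        ≤ ∫ s in (0:ℝ)..t, ‖Complex.exp (s • (-μ)) • (exp (s • B) * V')‖ :=
      intervalIntegral.norm_integral_le_integral_norm ht
    set Q : ℝ := ∑ j ∈ Finset.range L'.length, (2*K*t)^(j+1) / (Nat.factorial (j+1)) with hQdef
    have hQ0 : 0 ≤ Q :=
      Finset.sum_nonneg fun j _ => div_nonneg (pow_nonneg (by positivity) _) (Nat.cast_nonneg _)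
    have hφt : Complex.exp (t • (-μ)) • (exp (t • B) * V)
        = V + ∫ s in (0:ℝ)..t, Complex.exp (s • (-μ)) • (exp (s • B) * V') := by
      rw [hFTC]; abel
    have hφt_norm : ‖Complex.exp (t • (-μ)) • (exp (t • B) * V)‖
        ≤ ‖V‖ + Real.exp ((s₀ - μ.re) * t) * (Q * ‖V‖) := by
      rw [hφt]
      refine (norm_add_le _ _).trans ?_
      refine add_le_add le_rfl ?_
      refine (h3.trans h2).trans ?_
      rw [hQ]
    have hct : ‖Complex.exp (t • (-μ)) • (exp (t • B) * V)‖
        = Real.exp (-(μ.re)*t) * ‖exp (t • B) * V‖ := by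
      rw [norm_smul, hnormc]
    have key : ‖exp (t • B) * V‖
        = Real.exp (μ.re*t) * ‖Complex.exp (t • (-μ)) • (exp (t • B) * V)‖ := by
      rw [hct, ← mul_assoc, ← Real.exp_add, show μ.re*t + -(μ.re)*t = 0 by ring,
        Real.exp_zero, one_mul]
    have hfin : Sfun (μ :: L').length (2*K*t) = 1 + Q := by
      rw [List.length_cons]
      unfold Sfun
      rw [Finset.sum_range_succ']
      rw [hQdef]
      simp [add_comm]
    calc ‖exp (t • B) * V‖
        = Real.exp (μ.re*t) * ‖Complex.exp (t • (-μ)) • (exp (t • B) * V)‖ := key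
      _ ≤ Real.exp (μ.re*t) * (‖V‖ + Real.exp ((s₀ - μ.re) * t) * (Q * ‖V‖)) :=
          mul_le_mul_of_nonneg_left hφt_norm (Real.exp_nonneg _)
      _ = Real.exp (μ.re*t) * ‖V‖ + Real.exp (s₀*t) * (Q * ‖V‖) := by
          rw [mul_add, ← mul_assoc (Real.exp (μ.re*t)), ← Real.exp_add,
            show μ.re*t + (s₀ - μ.re)*t = s₀*t by ring]
      _ ≤ Real.exp (s₀*t) * ‖V‖ + Real.exp (s₀*t) * (Q * ‖V‖) := by
          apply add_le_add _ le_rfl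
          exact mul_le_mul_of_nonneg_right
            (Real.exp_le_exp.2 (mul_le_mul_of_nonneg_right hμre ht)) (norm_nonneg _)
      _ = Real.exp (s₀*t) * ((1 + Q) * ‖V‖) := by ring
      _ = Real.exp (s₀ * t) * Sfun (μ :: L').length (2*K*t) * ‖V‖ := by rw [hfin]; ring

lemma root_mem_spectrum {d : ℕ} (B : Matrix (Fin d) (Fin d) ℂ) (μ : ℂ)
    (h : μ ∈ B.charpoly.roots) : μ ∈ spectrum ℂ B := by
  have hroot : B.charpoly.IsRoot μ := (Polynomial.mem_roots (B.charpoly_monic.ne_zero)).1 h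
  rw [spectrum.mem_iff]
  intro hU
  have hdet : (Matrix.scalar (Fin d) μ - B).det = 0 := by
    have := eval_det (Matrix.charmatrix B) μ
    rw [Matrix.matPolyEquiv_charmatrix] at this
    simp only [eval_sub, eval_X, eval_C] at this
    rw [← Matrix.charpoly] at this
    rw [← this]
    exact hroot
  have halg : algebraMap ℂ (Matrix (Fin d) (Fin d) ℂ) μ = Matrix.scalar (Fin d) μ := rfl
  rw [halg] at hU
  have := (Matrix.isUnit_iff_isUnit_det _).1 hU
  rw [hdet] at this
  exact (this.ne_zero rfl).elim

lemma matrix_exp_bound {d : ℕ} (hd : 0 < d) (s₀ K : ℝ) (hK : 0 ≤ K)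
    (B : Matrix (Fin d) (Fin d) ℂ) (hB : ‖B‖ ≤ K)
    (hs : ∀ lam ∈ spectrum ℂ B, lam.re ≤ s₀) (t : ℝ) (ht : 0 ≤ t) :
    ‖exp (t • B)‖ ≤ Real.exp (s₀ * t) * Sfun d (2*K*t) := by
  haveI : Nonempty (Fin d) := Fin.pos_iff_nonempty.mp hd
  have h1 : ‖(1 : Matrix (Fin d) (Fin d) ℂ)‖ = 1 := by
    haveI : Nontrivial (EuclideanSpace ℂ (Fin d)) := inferInstance
    rw [Matrix.cstar_norm_def, map_one]
    exact ContinuousLinearMap.norm_id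
  haveI : NormOneClass (Matrix (Fin d) (Fin d) ℂ) := ⟨h1⟩
  set L := B.charpoly.roots.toList with hLdef
  have hlen : L.length = d := by
    rw [hLdef, Multiset.length_toList,
      (Polynomial.splits_iff_card_roots).mp (IsAlgClosed.splits _)]
    exact B.charpoly_natDegree_eq_dim.trans (by simp)
  have hprod : (L.map (fun μ => B - μ • 1)).prod = 0 := by
    have hsp : B.charpoly.Splits := IsAlgClosed.splits _
    have hfac := hsp.eq_prod_roots_of_monic (B.charpoly_monic)
    rw [← Multiset.coe_toList B.charpoly.roots, Multiset.map_coe, Multiset.prod_coe] at hfac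
    have h0 : Polynomial.aeval B B.charpoly = 0 := B.aeval_self_charpoly
    rw [hfac, map_list_prod] at h0
    rw [← h0, List.map_map]
    congr 1
    refine List.map_congr_left (fun μ _ => ?_)
    simp [Algebra.algebraMap_eq_smul_one]
  have hmem : ∀ μ ∈ L, μ.re ≤ s₀ ∧ ‖μ‖ ≤ K := by
    intro μ hμ
    have hsp : μ ∈ spectrum ℂ B := root_mem_spectrum B μ (Multiset.mem_toList.1 hμ)
    exact ⟨hs μ hsp, (spectrum.norm_le_norm_of_mem hsp).trans hB⟩
  have := core s₀ K hK h1.le B hB L hmem 1 (by rw [mul_one]; exact hprod) t ht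
  rw [mul_one, h1, mul_one, hlen] at this
  exact this


/-- The implication (2.6) ⇒ (2.7) of Proposition 2.3: if `‖A(ξ)‖ ≤ C(1+|ξ|)^l` and
`max Re σ(A(ξ)) ≤ s₀` for all `ξ`, then there is `k ∈ ℕ` such that for every `ε > 0`,
`sup { e^{-(s₀+ε)t}(1+|ξ|)^{-k} ‖exp(tA(ξ))‖ : t ≥ 0, ξ ∈ ℝⁿ } < ∞`. -/
theorem exp_growth_bound_of_spectral_bound (m n : ℕ) (hm : 1 ≤ m) (hn : 1 ≤ n) (s₀ : ℝ)
    (A : EuclideanSpace ℝ (Fin n) → Matrix (Fin m) (Fin m) ℂ)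
    (C : ℝ) (hC : 0 < C) (l : ℕ)
    (hA : ∀ ξ : EuclideanSpace ℝ (Fin n), ‖A ξ‖ ≤ C * (1 + ‖ξ‖) ^ l)
    (hspec : ∀ ξ : EuclideanSpace ℝ (Fin n), ∀ lam ∈ spectrum ℂ (A ξ), lam.re ≤ s₀) :
    ∃ k : ℕ, ∀ ε : ℝ, 0 < ε → ∃ M : ℝ,
      ∀ t : ℝ, 0 ≤ t → ∀ ξ : EuclideanSpace ℝ (Fin n),
        Real.exp (-(s₀ + ε) * t) * ((1 + ‖ξ‖) ^ k)⁻¹ *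
          ‖NormedSpace.exp (t • A ξ)‖ ≤ M := by
  refine ⟨l*m, fun ε hε => ?_⟩
  refine ⟨∑ j ∈ Finset.range m, (2*C/ε)^j, ?_⟩
  intro t ht ξ
  have hξ1 : (1:ℝ) ≤ 1 + ‖ξ‖ := by linarith [norm_nonneg ξ]
  have hK0 : (0:ℝ) < C * (1 + ‖ξ‖) ^ l := by positivity
  have hb := matrix_exp_bound (by omega : 0 < m) s₀ (C * (1 + ‖ξ‖) ^ l) hK0.le (A ξ)
    (hA ξ) (hspec ξ) t ht
  have hP1 : (1:ℝ) ≤ (1 + ‖ξ‖) ^ (l*m) := one_le_pow₀ hξ1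
  have hP0 : (0:ℝ) < (1 + ‖ξ‖) ^ (l*m) := lt_of_lt_of_le one_pos hP1
  have hcomb : Real.exp (-(s₀+ε)*t) * Real.exp (s₀*t) = Real.exp (-(ε*t)) := by
    rw [← Real.exp_add]; ring_nf
  calc Real.exp (-(s₀+ε)*t) * ((1 + ‖ξ‖) ^ (l*m))⁻¹ * ‖exp (t • A ξ)‖
      ≤ Real.exp (-(s₀+ε)*t) * ((1 + ‖ξ‖) ^ (l*m))⁻¹ *
        (Real.exp (s₀*t) * Sfun m (2*(C * (1 + ‖ξ‖) ^ l)*t)) := by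
        apply mul_le_mul_of_nonneg_left hb (by positivity)
    _ = (Real.exp (-(s₀+ε)*t) * Real.exp (s₀*t)) *
        (((1 + ‖ξ‖) ^ (l*m))⁻¹ * Sfun m (2*(C * (1 + ‖ξ‖) ^ l)*t)) := by ring
    _ = Real.exp (-(ε*t)) * (((1 + ‖ξ‖) ^ (l*m))⁻¹ * Sfun m (2*(C * (1 + ‖ξ‖) ^ l)*t)) := by
        rw [hcomb]
    _ ≤ ∑ j ∈ Finset.range m, (2*C/ε)^j := ?_
  unfold Sfun
  rw [Finset.mul_sum, Finset.mul_sum]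
  apply Finset.sum_le_sum
  intro j hj
  have hjm : j ≤ m := le_of_lt (Finset.mem_range.1 hj)
  have hfact : (0:ℝ) < (Nat.factorial j : ℝ) := by positivity
  have htj : t^j * Real.exp (-(ε*t)) ≤ (Nat.factorial j : ℝ)/ε^j := by
    have h := Real.pow_div_factorial_le_exp (ε*t) (mul_nonneg hε.le ht) j
    have h2 : (ε*t)^j ≤ Real.exp (ε*t) * (Nat.factorial j : ℝ) := by
      rw [div_le_iff₀ hfact] at h; exact h
    rw [show -(ε*t) = -(ε*t) from rfl, Real.exp_neg, le_div_iff₀ (by positivity : (0:ℝ) < ε^j)]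
    calc t^j * (Real.exp (ε*t))⁻¹ * ε^j = (ε*t)^j * (Real.exp (ε*t))⁻¹ := by
          rw [mul_pow]; ring
      _ ≤ (Real.exp (ε*t) * (Nat.factorial j : ℝ)) * (Real.exp (ε*t))⁻¹ :=
          mul_le_mul_of_nonneg_right h2 (by positivity)
      _ = (Nat.factorial j : ℝ) := by field_simp
  have e1 : ((1 + ‖ξ‖) : ℝ)^(l*j) ≤ (1 + ‖ξ‖)^(l*m) :=
    pow_le_pow_right₀ hξ1 (Nat.mul_le_mul_left l hjm)
  have hKt : (2*(C * (1 + ‖ξ‖) ^ l)*t)^j = (2*C)^j * (1 + ‖ξ‖)^(l*j) * t^j := by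
    rw [pow_mul]; ring
  calc Real.exp (-(ε*t)) * (((1 + ‖ξ‖) ^ (l*m))⁻¹ * ((2*(C * (1 + ‖ξ‖) ^ l)*t)^j / (Nat.factorial j)))
      = (2*C)^j * ((1 + ‖ξ‖)^(l*j) * ((1 + ‖ξ‖) ^ (l*m))⁻¹) *
        ((t^j * Real.exp (-(ε*t))) / (Nat.factorial j)) := by
        rw [hKt]; ring
    _ ≤ (2*C)^j * 1 * (((Nat.factorial j : ℝ)/ε^j) / (Nat.factorial j)) := by
        have g1 : ((1 + ‖ξ‖):ℝ)^(l*j) * ((1 + ‖ξ‖) ^ (l*m))⁻¹ ≤ 1 := by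
          rw [← div_eq_mul_inv, div_le_one hP0]; exact e1
        have g2 : (t^j * Real.exp (-(ε*t))) / (Nat.factorial j : ℝ)
            ≤ ((Nat.factorial j : ℝ)/ε^j) / (Nat.factorial j) := (div_le_div_iff_of_pos_right hfact).2 htj
        have g3 : (2*C)^j * ((1 + ‖ξ‖)^(l*j) * ((1 + ‖ξ‖) ^ (l*m))⁻¹) ≤ (2*C)^j * 1 :=
          mul_le_mul_of_nonneg_left g1 (by positivity)
        exact mul_le_mul g3 g2 (by positivity) (by positivity)
    _ = (2*C/ε)^j := by
        rw [div_pow]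
        field_simp
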